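/- For every ε ∈ (0,1) and m ∈ ℕ the following holds. Let (X,d) be a metric space and let f_i : X → [0,1]^m (i ∈ ℤ) be functions such that Σ_{i∈ℤ} 2^i·‖f_i(x) − f_i(y)‖₁ < ∞ for all x,y ∈ X. Then there is a map F : X → ℝ^{m(2+⌈log₂(1/ε)⌉)} with the ℓ₁ norm such that for all x,y ∈ X: (1−ε)·Σ_{i∈ℤ} 2^i·‖f_i(x)−f_i(y)‖₁ − 2·ζ(x,y) ≤ ‖F(x)−F(y)‖₁ ≤ Σ_{i∈ℤ} 2^i·‖f_i(x)−f_i(y)‖₁. -/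

import Mathlib

open scoped Classical

set_option maxHeartbeats 1000000

private lemma geom_comp (c : ℤ) :
    ∀ n : ℕ, (fun i : ℤ => if i ≤ c then (2:ℝ)^i else 0) ((fun n : ℕ => c - (n:ℤ)) n)
      = (2:ℝ)^c * (2⁻¹:ℝ)^n := by
  intro n
  simp only []
  rw [if_pos (by omega)]
  rw [zpow_sub₀ (by norm_num : (2:ℝ) ≠ 0), zpow_natCast, inv_pow]
  ring

private lemma geom_inj {c : ℤ} : Function.Injective (fun n : ℕ => c - (n:ℤ)) := by
  intro a b h; simpa using h

private lemma geom_supp (c : ℤ) :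
    Function.support (fun i : ℤ => if i ≤ c then (2:ℝ)^i else 0)
      ⊆ Set.range (fun n : ℕ => c - (n:ℤ)) := by
  intro i hi
  simp only [Function.mem_support, ne_eq] at hi
  have hic : i ≤ c := by by_contra h; simp [h] at hi
  exact ⟨(c - i).toNat, by simp; omega⟩

private lemma geom_summable (c : ℤ) :
    Summable (fun i : ℤ => if i ≤ c then (2:ℝ)^i else 0) := by
  rw [← Function.Injective.summable_iff (geom_inj (c := c))
    (fun x hx => by_contra fun h => hx (geom_supp c h))]
  exact Summable.congr ((summable_geometric_of_lt_one (by norm_num) (by norm_num :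
    (2⁻¹:ℝ) < 1)).mul_left ((2:ℝ)^c)) (fun n => (geom_comp c n).symm)

private lemma geom_tsum (c : ℤ) :
    (∑' i : ℤ, if i ≤ c then (2:ℝ)^i else 0) = (2:ℝ)^(c+1) := by
  rw [← Function.Injective.tsum_eq (geom_inj (c := c)) (geom_supp c)]
  rw [tsum_congr (geom_comp c), tsum_mul_left,
    tsum_geometric_of_lt_one (by norm_num) (by norm_num : (2⁻¹:ℝ) < 1)]
  rw [zpow_add₀ (by norm_num : (2:ℝ) ≠ 0)]
  norm_num

private lemma summable_del {g : ℤ → ℝ} (hg : Summable g) (b : ℤ) :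
    Summable fun i => if i = b then 0 else g i := by
  have : (fun i => if i = b then (0:ℝ) else g i)
      = fun i => g i - (if i = b then g b else 0) := by
    funext i; by_cases h : i = b <;> simp [h]
  rw [this]
  exact hg.sub (hasSum_ite_eq b (g b)).summable

private lemma key_lemma (ε : ℝ) (hε : 0 < ε) (D : ℕ) (hD : 0 < D)
    (hεD : (4:ℝ) * (2:ℝ)^(-(D:ℤ)) ≤ ε)
    (d : ℤ → ℝ) (hd1 : ∀ i, |d i| ≤ 1)
    (hs : Summable fun i : ℤ => (2:ℝ)^i * |d i|) :
    (1 - ε) * (∑' i : ℤ, (2:ℝ)^i * |d i|)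
      - 2 * (∑' i : ℤ, if ∃ j : ℤ, j < i ∧ d j ≠ 0 then
           (2:ℝ)^i * (|d i| - (⌊|d i|⌋ : ℝ)) else 0)
      ≤ ∑ r : Fin D, |∑' i : ℤ, if i % (D:ℤ) = (r:ℤ) then (2:ℝ)^i * d i else 0| := by
  have h2 : (2:ℝ) ≠ 0 := by norm_num
  have habs0 : ∀ i : ℤ, 0 ≤ (2:ℝ)^i * |d i| := fun i => by positivity
  have hsummable_ite : ∀ (p : ℤ → Prop) (inst : ∀ i : ℤ, Decidable (p i)),
      Summable (fun i : ℤ => @ite ℝ (p i) (inst i) ((2:ℝ)^i * |d i|) 0) := by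
    intro p inst
    apply Summable.of_nonneg_of_le (f := fun i : ℤ => (2:ℝ)^i * |d i|)
    · intro i; by_cases h : p i
      · rw [if_pos h]; exact habs0 i
      · rw [if_neg h]
    · intro i; by_cases h : p i
      · rw [if_pos h]
      · rw [if_neg h]; exact habs0 i
    · exact hs
  set G : ℤ → Prop := fun i => d i ≠ 0 ∧ (¬(∃ j : ℤ, j < i ∧ d j ≠ 0) ∨ |d i| = 1)
    with hGdef
  -- pointwise identity relating the ζ-term to the G-term
  have hpt : ∀ i : ℤ, (if ∃ j : ℤ, j < i ∧ d j ≠ 0 then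
        (2:ℝ)^i * (|d i| - (⌊|d i|⌋ : ℝ)) else 0)
      = (2:ℝ)^i * |d i| - (if G i then (2:ℝ)^i * |d i| else 0) := by
    intro i
    by_cases h0 : d i = 0
    · simp [h0]
    by_cases hP : ∃ j : ℤ, j < i ∧ d j ≠ 0
    · by_cases h1 : |d i| = 1
      · rw [if_pos hP, if_pos (show G i from ⟨h0, Or.inr h1⟩), h1]
        norm_num
      · have hlt : |d i| < 1 := lt_of_le_of_ne (hd1 i) h1
        have hfl : ⌊|d i|⌋ = 0 := Int.floor_eq_zero_iff.2 ⟨abs_nonneg _, hlt⟩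
        have hG : ¬ G i := by
          rintro ⟨-, h⟩; exact h.elim (fun hnp => hnp hP) h1
        rw [if_pos hP, if_neg hG, hfl]
        push_cast; ring
    · rw [if_neg hP, if_pos (show G i from ⟨h0, Or.inl hP⟩)]
      ring
  have hsG : Summable (fun i : ℤ => if G i then (2:ℝ)^i * |d i| else 0) :=
    hsummable_ite _ _
  have hsZ : Summable (fun i : ℤ => if ∃ j : ℤ, j < i ∧ d j ≠ 0 then
      (2:ℝ)^i * (|d i| - (⌊|d i|⌋ : ℝ)) else 0) :=
    (hs.sub hsG).congr (fun i => (hpt i).symm)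
  have hZ : (∑' i : ℤ, if ∃ j : ℤ, j < i ∧ d j ≠ 0 then
        (2:ℝ)^i * (|d i| - (⌊|d i|⌋ : ℝ)) else 0)
      = (∑' i : ℤ, (2:ℝ)^i * |d i|)
        - (∑' i : ℤ, if G i then (2:ℝ)^i * |d i| else 0) := by
    rw [tsum_congr hpt, hs.tsum_sub hsG]
  -- summabilities of the per-class families
  have hT : ∀ r : Fin D, Summable (fun i : ℤ =>
      if i % (D:ℤ) = (r:ℤ) then (2:ℝ)^i * |d i| else 0) :=
    fun r => hsummable_ite _ _
  have hTG : ∀ r : Fin D, Summable (fun i : ℤ =>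
      if i % (D:ℤ) = (r:ℤ) ∧ G i then (2:ℝ)^i * |d i| else 0) :=
    fun r => hsummable_ite _ _
  have habsF : ∀ (r : Fin D) (i : ℤ),
      |if i % (D:ℤ) = (r:ℤ) then (2:ℝ)^i * d i else 0|
        = (if i % (D:ℤ) = (r:ℤ) then (2:ℝ)^i * |d i| else 0) := by
    intro r i
    by_cases h : i % (D:ℤ) = (r:ℤ) <;>
      simp [h, abs_mul, abs_of_pos (zpow_pos (by norm_num : (0:ℝ) < 2) i)]
  have hF : ∀ r : Fin D, Summable (fun i : ℤ =>
      if i % (D:ℤ) = (r:ℤ) then (2:ℝ)^i * d i else 0) :=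
    fun r => Summable.of_abs ((hT r).congr (fun i => (habsF r i).symm))
  -- summing an ite over residues
  have sum_ite_mod : ∀ (v : ℝ) (i : ℤ),
      (∑ r : Fin D, if i % (D:ℤ) = (r:ℤ) then v else 0) = v := by
    intro v i
    have h0 : 0 ≤ i % (D:ℤ) := Int.emod_nonneg i (by exact_mod_cast hD.ne')
    have h1 : i % (D:ℤ) < (D:ℤ) := Int.emod_lt_of_pos i (by exact_mod_cast hD)
    have hlt : (i % (D:ℤ)).toNat < D := by omega
    have heq : (∑ r : Fin D, if i % (D:ℤ) = (r:ℤ) then v else 0)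
        = (if i % (D:ℤ) = ((⟨(i % (D:ℤ)).toNat, hlt⟩ : Fin D) : ℤ) then v else 0) := by
      apply Finset.sum_eq_single
      · intro b _ hb
        apply if_neg
        intro h
        apply hb
        apply Fin.ext
        simp only at h ⊢
        omega
      · intro h; exact absurd (Finset.mem_univ _) h
    rw [heq, if_pos (by simp only []; omega)]
  -- the per-class claim
  have claim_r : ∀ r : Fin D,
      2 * (∑' i : ℤ, if i % (D:ℤ) = (r:ℤ) ∧ G i then (2:ℝ)^i * |d i| else 0)
        - (1 + ε) * (∑' i : ℤ, if i % (D:ℤ) = (r:ℤ) then (2:ℝ)^i * |d i| else 0)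
      ≤ |∑' i : ℤ, if i % (D:ℤ) = (r:ℤ) then (2:ℝ)^i * d i else 0| := by
    intro r
    by_cases hne : ∃ i : ℤ, i % (D:ℤ) = (r:ℤ) ∧ G i
    · -- find the greatest such index
      obtain ⟨n, hn⟩ := exists_nat_gt (∑' i : ℤ, (2:ℝ)^i * |d i|)
      have h2n : (∑' i : ℤ, (2:ℝ)^i * |d i|) < (2:ℝ)^((n:ℤ)) := by
        rw [zpow_natCast]
        calc (∑' i : ℤ, (2:ℝ)^i * |d i|) < (n:ℝ) := hn
        _ ≤ (2:ℝ)^n := by exact_mod_cast (Nat.lt_two_pow_self (n := n)).le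
      obtain ⟨i₁, hi₁⟩ := hne
      have hbdd : ∀ z : ℤ, (z % (D:ℤ) = (r:ℤ) ∧ G z) → z ≤ max (n:ℤ) i₁ := by
        rintro z ⟨hz1, hz2, hz3⟩
        rcases hz3 with hz3 | hz3
        · refine le_max_of_le_right ?_
          by_contra hlt
          push_neg at hlt
          exact hz3 ⟨i₁, hlt, hi₁.2.1⟩
        · refine le_max_of_le_left ?_
          have hterm : (2:ℝ)^z ≤ ∑' i : ℤ, (2:ℝ)^i * |d i| := by
            have h := hs.le_tsum z (fun j _ => habs0 j)
            rwa [hz3, mul_one] at h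
          have : z < (n:ℤ) := by
            rw [← zpow_lt_zpow_iff_right₀ (by norm_num : (1:ℝ) < 2)]
            exact lt_of_le_of_lt hterm h2n
          exact this.le
      obtain ⟨b, hbQ, hbmax⟩ := Int.exists_greatest_of_bdd ⟨_, hbdd⟩ ⟨i₁, hi₁⟩
      -- split off the term at b
      have hsplit1 : (∑' i : ℤ, if i % (D:ℤ) = (r:ℤ) then (2:ℝ)^i * |d i| else 0)
          = (2:ℝ)^b * |d b| + ∑' i : ℤ, if i = b then 0 else
              (if i % (D:ℤ) = (r:ℤ) then (2:ℝ)^i * |d i| else 0) := by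
        rw [Summable.tsum_eq_add_tsum_ite (hT r) b, if_pos hbQ.1]
      have hsplit2 : (∑' i : ℤ, if i % (D:ℤ) = (r:ℤ) ∧ G i then (2:ℝ)^i * |d i| else 0)
          = (2:ℝ)^b * |d b| + ∑' i : ℤ, if i = b then 0 else
              (if i % (D:ℤ) = (r:ℤ) ∧ G i then (2:ℝ)^i * |d i| else 0) := by
        rw [Summable.tsum_eq_add_tsum_ite (hTG r) b, if_pos hbQ]
      have hsplit3 : (∑' i : ℤ, if i % (D:ℤ) = (r:ℤ) then (2:ℝ)^i * d i else 0)
          = (2:ℝ)^b * d b + ∑' i : ℤ, if i = b then 0 else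
              (if i % (D:ℤ) = (r:ℤ) then (2:ℝ)^i * d i else 0) := by
        rw [Summable.tsum_eq_add_tsum_ite (hF r) b, if_pos hbQ.1]
      have hU0 : 0 ≤ ∑' i : ℤ, if i = b then 0 else
          (if i % (D:ℤ) = (r:ℤ) then (2:ℝ)^i * |d i| else 0) := by
        apply tsum_nonneg
        intro i
        by_cases h : i = b
        · simp [h]
        · rw [if_neg h]
          by_cases hq : i % (D:ℤ) = (r:ℤ) <;> simp [hq, habs0 i]
      have hWU : |∑' i : ℤ, if i = b then 0 else
            (if i % (D:ℤ) = (r:ℤ) then (2:ℝ)^i * d i else 0)|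
          ≤ ∑' i : ℤ, if i = b then 0 else
            (if i % (D:ℤ) = (r:ℤ) then (2:ℝ)^i * |d i| else 0) := by
        have hsummab : Summable (fun i : ℤ => ‖if i = b then (0:ℝ) else
            (if i % (D:ℤ) = (r:ℤ) then (2:ℝ)^i * d i else 0)‖) := by
          simp only [Real.norm_eq_abs]
          apply Summable.congr (summable_del (hT r) b)
          intro i
          by_cases h : i = b
          · simp [h]
          · rw [if_neg h, if_neg h, habsF r i]
        calc |∑' i : ℤ, if i = b then 0 else
              (if i % (D:ℤ) = (r:ℤ) then (2:ℝ)^i * d i else 0)|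
            ≤ ∑' i : ℤ, |if i = b then 0 else
              (if i % (D:ℤ) = (r:ℤ) then (2:ℝ)^i * d i else 0)| := by
              simpa using norm_tsum_le_tsum_norm hsummab
        _ = ∑' i : ℤ, if i = b then 0 else
              (if i % (D:ℤ) = (r:ℤ) then (2:ℝ)^i * |d i| else 0) := by
              apply tsum_congr
              intro i
              by_cases h : i = b
              · simp [h]
              · rw [if_neg h, if_neg h, habsF r i]
      have hlow : (2:ℝ)^b * |d b| - (∑' i : ℤ, if i = b then 0 else
            (if i % (D:ℤ) = (r:ℤ) then (2:ℝ)^i * |d i| else 0))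
          ≤ |∑' i : ℤ, if i % (D:ℤ) = (r:ℤ) then (2:ℝ)^i * d i else 0| := by
        rw [hsplit3]
        have h := abs_sub_abs_le_abs_sub ((2:ℝ)^b * d b)
          (-(∑' i : ℤ, if i = b then 0 else
            (if i % (D:ℤ) = (r:ℤ) then (2:ℝ)^i * d i else 0)))
        rw [abs_neg, sub_neg_eq_add] at h
        have habsb : |(2:ℝ)^b * d b| = (2:ℝ)^b * |d b| := by
          rw [abs_mul, abs_of_pos (zpow_pos (by norm_num : (0:ℝ) < 2) b)]
        rw [habsb] at h
        linarith [hWU, h]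
      -- the key estimate : 2 * UG ≤ ε * (2^b * |d b|)
      have hmain : 2 * (∑' i : ℤ, if i = b then 0 else
            (if i % (D:ℤ) = (r:ℤ) ∧ G i then (2:ℝ)^i * |d i| else 0))
          ≤ ε * ((2:ℝ)^b * |d b|) := by
        rcases hbQ.2.2 with hmin | h1
        · have hz : ∀ i : ℤ, (if i = b then 0 else
              (if i % (D:ℤ) = (r:ℤ) ∧ G i then (2:ℝ)^i * |d i| else 0)) = 0 := by
            intro i
            by_cases h : i = b
            · simp [h]
            · rw [if_neg h]
              apply if_neg
              rintro ⟨hq1, hq2, hq3⟩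
              have hib : i < b := lt_of_le_of_ne (hbmax i ⟨hq1, hq2, hq3⟩) h
              exact hmin ⟨i, hib, hq2⟩
          rw [tsum_congr hz, tsum_zero, mul_zero]
          exact mul_nonneg hε.le (by positivity)
        · have hle : ∀ i : ℤ, (if i = b then 0 else
              (if i % (D:ℤ) = (r:ℤ) ∧ G i then (2:ℝ)^i * |d i| else 0))
              ≤ (if i ≤ b - (D:ℤ) then (2:ℝ)^i else 0) := by
            intro i
            by_cases h : i = b
            · rw [if_pos h]; split <;> positivity
            · rw [if_neg h]
              by_cases hQi : i % (D:ℤ) = (r:ℤ) ∧ G i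
              · have hib : i < b := lt_of_le_of_ne (hbmax i hQi) h
                have hdvd : (D:ℤ) ∣ b - i := by
                  have hmod : i % (D:ℤ) = b % (D:ℤ) := by rw [hQi.1, hbQ.1]
                  have h' : (D:ℤ) ∣ i - b :=
                    Int.dvd_of_emod_eq_zero (Int.emod_eq_emod_iff_emod_sub_eq_zero.1 hmod)
                  rw [← neg_sub]
                  exact dvd_neg.mpr h'
                obtain ⟨t, ht⟩ := hdvd
                have hDpos : (0:ℤ) < (D:ℤ) := by exact_mod_cast hD
                have ht1 : 1 ≤ t := by nlinarith
                have hiD : i ≤ b - (D:ℤ) := by nlinarith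
                rw [if_pos hQi, if_pos hiD]
                calc (2:ℝ)^i * |d i| ≤ (2:ℝ)^i * 1 :=
                      mul_le_mul_of_nonneg_left (hd1 i) (by positivity)
                _ = (2:ℝ)^i := mul_one _
              · rw [if_neg hQi]; split <;> positivity
          have hUG : (∑' i : ℤ, if i = b then 0 else
                (if i % (D:ℤ) = (r:ℤ) ∧ G i then (2:ℝ)^i * |d i| else 0))
              ≤ (2:ℝ)^(b - (D:ℤ) + 1) := by
            rw [← geom_tsum (b - (D:ℤ))]
            exact Summable.tsum_le_tsum hle (summable_del (hTG r) b) (geom_summable _)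
          have hpow : 2 * (2:ℝ)^(b - (D:ℤ) + 1) = (4 * (2:ℝ)^(-(D:ℤ))) * (2:ℝ)^b := by
            rw [show b - (D:ℤ) + 1 = b + -(D:ℤ) + 1 by ring, zpow_add₀ h2, zpow_add₀ h2,
              zpow_one]
            ring
          rw [h1, mul_one]
          calc 2 * (∑' i : ℤ, if i = b then 0 else
                (if i % (D:ℤ) = (r:ℤ) ∧ G i then (2:ℝ)^i * |d i| else 0))
              ≤ 2 * (2:ℝ)^(b - (D:ℤ) + 1) := by linarith
          _ = (4 * (2:ℝ)^(-(D:ℤ))) * (2:ℝ)^b := hpow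
          _ ≤ ε * (2:ℝ)^b := mul_le_mul_of_nonneg_right hεD (by positivity)
      rw [hsplit1, hsplit2]
      have hεU := mul_nonneg hε.le hU0
      linarith [hmain, hlow, hεU]
    · -- the good set is empty in this class
      have hTG0 : (∑' i : ℤ, if i % (D:ℤ) = (r:ℤ) ∧ G i then (2:ℝ)^i * |d i| else 0)
          = 0 := by
        rw [tsum_congr (fun i => if_neg (fun h => hne ⟨i, h⟩)), tsum_zero]
      have hT0 : 0 ≤ ∑' i : ℤ, if i % (D:ℤ) = (r:ℤ) then (2:ℝ)^i * |d i| else 0 := by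
        apply tsum_nonneg
        intro i
        by_cases hq : i % (D:ℤ) = (r:ℤ) <;> simp [hq, habs0 i]
      rw [hTG0]
      have habsnn : 0 ≤ |∑' i : ℤ, if i % (D:ℤ) = (r:ℤ) then (2:ℝ)^i * d i else 0| :=
        abs_nonneg _
      nlinarith
  -- assemble over residues
  have hsplitT : (∑ r : Fin D, ∑' i : ℤ,
        if i % (D:ℤ) = (r:ℤ) then (2:ℝ)^i * |d i| else 0)
      = ∑' i : ℤ, (2:ℝ)^i * |d i| := by
    rw [← Summable.tsum_finsetSum (fun r _ => hT r)]
    exact tsum_congr (fun i => sum_ite_mod ((2:ℝ)^i * |d i|) i)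
  have hsplitTG : (∑ r : Fin D, ∑' i : ℤ,
        if i % (D:ℤ) = (r:ℤ) ∧ G i then (2:ℝ)^i * |d i| else 0)
      = ∑' i : ℤ, if G i then (2:ℝ)^i * |d i| else 0 := by
    rw [← Summable.tsum_finsetSum (fun r _ => hTG r)]
    apply tsum_congr
    intro i
    by_cases hG : G i
    · rw [if_pos hG]
      refine Eq.trans (Finset.sum_congr rfl (fun r _ => ?_))
        (sum_ite_mod ((2:ℝ)^i * |d i|) i)
      by_cases hq : i % (D:ℤ) = (r:ℤ)
      · rw [if_pos ⟨hq, hG⟩, if_pos hq]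
      · rw [if_neg (fun hc => hq hc.1), if_neg hq]
    · rw [if_neg hG]
      exact Finset.sum_eq_zero (fun r _ => if_neg (fun hc => hG hc.2))
  calc (1 - ε) * (∑' i : ℤ, (2:ℝ)^i * |d i|)
        - 2 * (∑' i : ℤ, if ∃ j : ℤ, j < i ∧ d j ≠ 0 then
            (2:ℝ)^i * (|d i| - (⌊|d i|⌋ : ℝ)) else 0)
      = ∑ r : Fin D,
          (2 * (∑' i : ℤ, if i % (D:ℤ) = (r:ℤ) ∧ G i then (2:ℝ)^i * |d i| else 0)
            - (1 + ε) * (∑' i : ℤ, if i % (D:ℤ) = (r:ℤ) then (2:ℝ)^i * |d i| else 0)) := by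
        rw [Finset.sum_sub_distrib, ← Finset.mul_sum, ← Finset.mul_sum, hsplitT, hsplitTG,
          hZ]
        ring
  _ ≤ ∑ r : Fin D, |∑' i : ℤ, if i % (D:ℤ) = (r:ℤ) then (2:ℝ)^i * d i else 0| :=
      Finset.sum_le_sum (fun r _ => claim_r r)

private lemma upper_lemma (D : ℕ) (hD : 0 < D) (d : ℤ → ℝ)
    (hs : Summable fun i : ℤ => (2:ℝ)^i * |d i|) :
    (∑ r : Fin D, |∑' i : ℤ, if i % (D:ℤ) = (r:ℤ) then (2:ℝ)^i * d i else 0|)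
      ≤ ∑' i : ℤ, (2:ℝ)^i * |d i| := by
  have habs0 : ∀ i : ℤ, 0 ≤ (2:ℝ)^i * |d i| := fun i => by positivity
  have hT : ∀ r : Fin D, Summable (fun i : ℤ =>
      if i % (D:ℤ) = (r:ℤ) then (2:ℝ)^i * |d i| else 0) := by
    intro r
    apply Summable.of_nonneg_of_le (f := fun i : ℤ => (2:ℝ)^i * |d i|) _ _ hs
    · intro i; by_cases h : i % (D:ℤ) = (r:ℤ)
      · rw [if_pos h]; exact habs0 i
      · rw [if_neg h]
    · intro i; by_cases h : i % (D:ℤ) = (r:ℤ)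
      · rw [if_pos h]
      · rw [if_neg h]; exact habs0 i
  have habsF : ∀ (r : Fin D) (i : ℤ),
      |if i % (D:ℤ) = (r:ℤ) then (2:ℝ)^i * d i else 0|
        = (if i % (D:ℤ) = (r:ℤ) then (2:ℝ)^i * |d i| else 0) := by
    intro r i
    by_cases h : i % (D:ℤ) = (r:ℤ) <;>
      simp [h, abs_mul, abs_of_pos (zpow_pos (by norm_num : (0:ℝ) < 2) i)]
  have sum_ite_mod : ∀ (v : ℝ) (i : ℤ),
      (∑ r : Fin D, if i % (D:ℤ) = (r:ℤ) then v else 0) = v := by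
    intro v i
    have h0 : 0 ≤ i % (D:ℤ) := Int.emod_nonneg i (by exact_mod_cast hD.ne')
    have h1 : i % (D:ℤ) < (D:ℤ) := Int.emod_lt_of_pos i (by exact_mod_cast hD)
    have hlt : (i % (D:ℤ)).toNat < D := by omega
    have heq : (∑ r : Fin D, if i % (D:ℤ) = (r:ℤ) then v else 0)
        = (if i % (D:ℤ) = ((⟨(i % (D:ℤ)).toNat, hlt⟩ : Fin D) : ℤ) then v else 0) := by
      apply Finset.sum_eq_single
      · intro b _ hb
        apply if_neg
        intro h
        apply hb
        apply Fin.ext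
        simp only at h ⊢
        omega
      · intro h; exact absurd (Finset.mem_univ _) h
    rw [heq, if_pos (by simp only []; omega)]
  calc (∑ r : Fin D, |∑' i : ℤ, if i % (D:ℤ) = (r:ℤ) then (2:ℝ)^i * d i else 0|)
      ≤ ∑ r : Fin D, ∑' i : ℤ, (if i % (D:ℤ) = (r:ℤ) then (2:ℝ)^i * |d i| else 0) := by
        refine Finset.sum_le_sum fun r _ => ?_
        have hsummab : Summable (fun i : ℤ =>
            ‖if i % (D:ℤ) = (r:ℤ) then (2:ℝ)^i * d i else 0‖) := by
          simp only [Real.norm_eq_abs]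
          exact (hT r).congr (fun i => (habsF r i).symm)
        calc |∑' i : ℤ, if i % (D:ℤ) = (r:ℤ) then (2:ℝ)^i * d i else 0|
            ≤ ∑' i : ℤ, ‖if i % (D:ℤ) = (r:ℤ) then (2:ℝ)^i * d i else 0‖ := by
              simpa using norm_tsum_le_tsum_norm hsummab
        _ = ∑' i : ℤ, (if i % (D:ℤ) = (r:ℤ) then (2:ℝ)^i * |d i| else 0) :=
              tsum_congr fun i => by rw [Real.norm_eq_abs, habsF r i]
  _ = ∑' i : ℤ, (2:ℝ)^i * |d i| := by
        rw [← Summable.tsum_finsetSum (fun r _ => hT r)]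
        exact tsum_congr fun i => sum_ite_mod ((2:ℝ)^i * |d i|) i


/-- Corollary 3.5: the vector-valued version of the multiscale combination
lemma.  Given `f_i : X → [0,1]^m` with `Σ_i 2^i ‖f_i(x) − f_i(y)‖₁ < ∞`, there
is a map `F` into `ℓ₁` of dimension `m(2 + ⌈log₂(1/ε)⌉)` with
`(1−ε)·Σ_i 2^i‖f_i(x)−f_i(y)‖₁ − 2ζ(x,y) ≤ ‖F(x)−F(y)‖₁
  ≤ Σ_i 2^i‖f_i(x)−f_i(y)‖₁`. -/
theorem multiscale_combination_vector (ε : ℝ) (hε : 0 < ε) (hε1 : ε < 1) (m : ℕ)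
    (X : Type) [MetricSpace X] (f : ℤ → X → Fin m → ℝ)
    (hf : ∀ (i : ℤ) (x : X) (k : Fin m), f i x k ∈ Set.Icc (0 : ℝ) 1)
    (hsum : ∀ x y : X, Summable fun i : ℤ => (2 : ℝ) ^ i * ∑ k, |f i x k - f i y k|) :
    ∃ F : X → Fin (m * (2 + ⌈Real.logb 2 (1 / ε)⌉₊)) → ℝ,
      ∀ x y : X,
        ((1 - ε) * (∑' i : ℤ, (2 : ℝ) ^ i * ∑ k, |f i x k - f i y k|) -
            2 * (∑ k : Fin m, ∑' i : ℤ,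
              if ∃ j : ℤ, j < i ∧ f j x k - f j y k ≠ 0 then
                (2 : ℝ) ^ i * (|f i x k - f i y k| - (⌊|f i x k - f i y k|⌋ : ℝ))
              else 0) ≤
          ∑ l, |F x l - F y l|) ∧
        ∑ l, |F x l - F y l| ≤ ∑' i : ℤ, (2 : ℝ) ^ i * ∑ k, |f i x k - f i y k| := by
  set D : ℕ := 2 + ⌈Real.logb 2 (1 / ε)⌉₊ with hDdef
  have hD : 0 < D := by omega
  set c : ℕ := ⌈Real.logb 2 (1 / ε)⌉₊ with hcdef
  have hc : (1/ε) ≤ (2:ℝ)^c := by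
    have h0 : (0:ℝ) < 1/ε := by positivity
    calc (1/ε) = (2:ℝ) ^ (Real.logb 2 (1/ε)) :=
          (Real.rpow_logb (by norm_num) (by norm_num) h0).symm
    _ ≤ (2:ℝ) ^ ((c : ℕ) : ℝ) :=
          (Real.rpow_le_rpow_left_iff (by norm_num : (1:ℝ) < 2)).mpr (Nat.le_ceil _)
    _ = (2:ℝ)^(c : ℕ) := by rw [Real.rpow_natCast]
  have hA : (0:ℝ) < (2:ℝ)^(c:ℕ) := by positivity
  have hεD : (4:ℝ) * (2:ℝ)^(-(D:ℤ)) ≤ ε := by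
    have hpow : (2:ℝ)^((D:ℤ)) = 4 * (2:ℝ)^(c:ℕ) := by
      calc (2:ℝ)^((D:ℤ)) = (2:ℝ)^(D:ℕ) := by rw [zpow_natCast]
      _ = (2:ℝ)^(2 + c : ℕ) := by rw [hDdef]
      _ = 4 * (2:ℝ)^(c:ℕ) := by rw [pow_add]; norm_num
    have h1 : 1 ≤ (2:ℝ)^(c:ℕ) * ε := (div_le_iff₀ hε).1 hc
    have h2 : ((2:ℝ)^(c:ℕ))⁻¹ ≤ ε := by
      rw [inv_eq_one_div, div_le_iff₀ hA]; linarith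
    rw [zpow_neg, hpow]
    have h3 : (4:ℝ) * (4 * (2:ℝ)^(c:ℕ))⁻¹ = ((2:ℝ)^(c:ℕ))⁻¹ := by
      field_simp
    rw [h3]; exact h2
  rcases isEmpty_or_nonempty X with hX | hX
  · exact ⟨fun _ _ => 0, fun x => (IsEmpty.false x).elim⟩
  obtain ⟨x₀⟩ := hX
  have hd1 : ∀ (i : ℤ) (x y : X) (k : Fin m), |f i x k - f i y k| ≤ 1 := by
    intro i x y k
    have h1 := hf i x k; have h2 := hf i y k
    rw [Set.mem_Icc] at h1 h2
    rw [abs_le]; constructor <;> linarith [h1.1, h1.2, h2.1, h2.2]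
  have hsum_k : ∀ (x y : X) (k : Fin m),
      Summable (fun i : ℤ => (2:ℝ)^i * |f i x k - f i y k|) := by
    intro x y k
    apply Summable.of_nonneg_of_le
      (f := fun i : ℤ => (2:ℝ)^i * ∑ k', |f i x k' - f i y k'|) _ _ (hsum x y)
    · intro i; positivity
    · intro i
      have hle : |f i x k - f i y k| ≤ ∑ k', |f i x k' - f i y k'| :=
        Finset.single_le_sum (f := fun k' => |f i x k' - f i y k'|)
          (fun k' _ => abs_nonneg _) (Finset.mem_univ k)
      exact mul_le_mul_of_nonneg_left hle (by positivity)
  have hsummable_base : ∀ (x : X) (k : Fin m) (r : Fin D), Summable (fun i : ℤ =>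
      if i % (D:ℤ) = (r:ℤ) then (2:ℝ)^i * (f i x k - f i x₀ k) else 0) := by
    intro x k r
    apply Summable.of_abs
    apply Summable.of_nonneg_of_le
      (f := fun i : ℤ => (2:ℝ)^i * |f i x k - f i x₀ k|) _ _ (hsum_k x x₀ k)
    · intro i; positivity
    · intro i
      by_cases h : i % (D:ℤ) = (r:ℤ)
      · rw [if_pos h, abs_mul, abs_of_pos (zpow_pos (by norm_num : (0:ℝ) < 2) i)]
      · rw [if_neg h, abs_zero]; positivity
  set Fm : X → Fin (m * D) → ℝ := fun x l => ∑' i : ℤ,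
    if i % (D:ℤ) = (((finProdFinEquiv.symm l).2 : Fin D) : ℤ) then
      (2:ℝ)^i * (f i x ((finProdFinEquiv.symm l).1) - f i x₀ ((finProdFinEquiv.symm l).1))
    else 0 with hFm
  refine ⟨Fm, fun x y => ?_⟩
  have hdiff : ∀ (k : Fin m) (r : Fin D),
      (∑' i : ℤ, if i % (D:ℤ) = (r:ℤ) then (2:ℝ)^i * (f i x k - f i x₀ k) else 0)
        - (∑' i : ℤ, if i % (D:ℤ) = (r:ℤ) then (2:ℝ)^i * (f i y k - f i x₀ k) else 0)
      = ∑' i : ℤ, if i % (D:ℤ) = (r:ℤ) then (2:ℝ)^i * (f i x k - f i y k) else 0 := by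
    intro k r
    rw [← Summable.tsum_sub (hsummable_base x k r) (hsummable_base y k r)]
    apply tsum_congr; intro i
    by_cases h : i % (D:ℤ) = (r:ℤ)
    · rw [if_pos h, if_pos h, if_pos h]; ring
    · rw [if_neg h, if_neg h, if_neg h]; ring
  have hFsum : (∑ l, |Fm x l - Fm y l|) = ∑ k : Fin m, ∑ r : Fin D,
      |∑' i : ℤ, if i % (D:ℤ) = (r:ℤ) then (2:ℝ)^i * (f i x k - f i y k) else 0| := by
    calc (∑ l, |Fm x l - Fm y l|)
        = ∑ p : Fin m × Fin D, |Fm x (finProdFinEquiv p) - Fm y (finProdFinEquiv p)| :=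
          (Equiv.sum_comp finProdFinEquiv (fun l => |Fm x l - Fm y l|)).symm
    _ = ∑ k : Fin m, ∑ r : Fin D,
          |∑' i : ℤ, if i % (D:ℤ) = (r:ℤ) then (2:ℝ)^i * (f i x k - f i y k) else 0| := by
        rw [Fintype.sum_prod_type]
        refine Finset.sum_congr rfl fun k _ => Finset.sum_congr rfl fun r _ => ?_
        rw [hFm]
        simp only [Equiv.symm_apply_apply]
        rw [hdiff k r]
  have hS : (∑' i : ℤ, (2:ℝ)^i * ∑ k, |f i x k - f i y k|)
      = ∑ k : Fin m, ∑' i : ℤ, (2:ℝ)^i * |f i x k - f i y k| := by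
    rw [← Summable.tsum_finsetSum (fun k _ => hsum_k x y k)]
    apply tsum_congr; intro i; rw [Finset.mul_sum]
  constructor
  · -- lower bound
    rw [hFsum, hS]
    have hdistrib : (1 - ε) * (∑ k : Fin m, ∑' i : ℤ, (2:ℝ)^i * |f i x k - f i y k|)
          - 2 * (∑ k : Fin m, ∑' i : ℤ,
            if ∃ j : ℤ, j < i ∧ f j x k - f j y k ≠ 0 then
              (2:ℝ)^i * (|f i x k - f i y k| - (⌊|f i x k - f i y k|⌋ : ℝ)) else 0)
        = ∑ k : Fin m, ((1 - ε) * (∑' i : ℤ, (2:ℝ)^i * |f i x k - f i y k|)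
          - 2 * (∑' i : ℤ, if ∃ j : ℤ, j < i ∧ f j x k - f j y k ≠ 0 then
              (2:ℝ)^i * (|f i x k - f i y k| - (⌊|f i x k - f i y k|⌋ : ℝ)) else 0)) := by
      rw [Finset.sum_sub_distrib, Finset.mul_sum, Finset.mul_sum]
    rw [hdistrib]
    refine Finset.sum_le_sum fun k _ => ?_
    exact key_lemma ε hε D hD hεD (fun i => f i x k - f i y k)
      (fun i => hd1 i x y k) (hsum_k x y k)
  · -- upper bound
    rw [hFsum, hS]
    refine Finset.sum_le_sum fun k _ => ?_
    exact upper_lemma D hD (fun i => f i x k - f i y k) (hsum_k x y k)
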